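/- For every nonempty S ⊆ {1, …, n}: (a) F(S) is upward closed in [0,1], i.e., if a ∈ F(S) and a ≤ a' ≤ 1 then a' ∈ F(S); (b) if F(S) ≠ ∅ then the infimum C(S) = inf F(S) belongs to F(S). Moreover, there exists a connected division of [0,1] with egalitarian welfare at least B if and only if F({1, …, n}) ≠ ∅. (Properties underlying the FPT-FPTAS for egalitarian welfare, Theorem 5.) -/

import Mathlib

open MeasureTheory Set

/-- `Feas n v B S` is the set `F(S)`: points `a ∈ [0,1]` such that `[0,a]` can be
partitioned into `S.card` consecutive intervals assigned bijectively to the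
players of `S`, each player valuing her own interval at least `B`. -/
def Feas (n : ℕ) (v : Fin n → Measure ℝ) (B : ℝ) (S : Finset (Fin n)) : Set ℝ :=
  {a | a ∈ Icc (0 : ℝ) 1 ∧
    ∃ (c : Fin (S.card + 1) → ℝ) (σ : Fin S.card ≃ {i // i ∈ S}),
      Monotone c ∧ c 0 = 0 ∧ c (Fin.last S.card) = a ∧
      ∀ b : Fin S.card,
        ENNReal.ofReal B ≤ v (σ b) (Ioo (c b.castSucc) (c b.succ))}

lemma feas_up (n : ℕ) (v : Fin n → Measure ℝ) (B : ℝ) {S : Finset (Fin n)}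
    (hS : S.Nonempty) {a a' : ℝ} (ha : a ∈ Feas n v B S) (h1 : a ≤ a') (h2 : a' ≤ 1) :
    a' ∈ Feas n v B S := by
  obtain ⟨⟨ha0, _⟩, c, σ, hmono, hc0, hclast, hval⟩ := ha
  have hcard : S.card ≠ 0 := Finset.card_ne_zero_of_mem hS.choose_spec
  refine ⟨⟨le_trans ha0 h1, h2⟩,
    fun j => if j = Fin.last _ then a' else c j, σ, ?_, ?_, ?_, ?_⟩
  · intro i j hij
    by_cases hj : j = Fin.last _
    · subst hj
      by_cases hi : i = Fin.last _
      · simp [hi]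
      · simp only [if_neg hi, if_pos rfl]
        calc c i ≤ c (Fin.last _) := hmono (Fin.le_last i)
        _ = a := hclast
        _ ≤ a' := h1
    · have hi : i ≠ Fin.last _ := by
        intro h; subst h
        exact hj (le_antisymm (Fin.le_last j) hij)
      simp only [if_neg hi, if_neg hj]
      exact hmono hij
  · have : (0 : Fin (S.card + 1)) ≠ Fin.last _ := by
      simp [Fin.ext_iff, eq_comm, hcard]
    simp [this, hc0]
  · simp
  · intro b
    have hcs : (b.castSucc : Fin (S.card + 1)) ≠ Fin.last _ :=
      ne_of_lt (Fin.castSucc_lt_last b)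
    simp only [if_neg hcs]
    by_cases hsucc : b.succ = Fin.last _
    · simp only [if_pos hsucc]
      refine le_trans (hval b) (measure_mono (Ioo_subset_Ioo le_rfl ?_))
      calc c b.succ = c (Fin.last _) := by rw [hsucc]
      _ = a := hclast
      _ ≤ a' := h1
    · simp only [if_neg hsucc]
      exact hval b

lemma measure_ioo_limit {μ : Measure ℝ} [hna : NullSingletonClass μ] (hfin : μ Set.univ ≠ ⊤)
    {x y : ℕ → ℝ} {X Y : ℝ} (hx : Filter.Tendsto x Filter.atTop (nhds X))
    (hy : Filter.Tendsto y Filter.atTop (nhds Y))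
    {B : ℝ} (h : ∀ k, ENNReal.ofReal B ≤ μ (Ioo (x k) (y k))) :
    ENNReal.ofReal B ≤ μ (Ioo X Y) := by
  have key : ∀ m : ℕ, ENNReal.ofReal B ≤ μ (Icc (X - 1/(m+1)) (Y + 1/(m+1))) := by
    intro m
    have hδ : (0:ℝ) < 1/(m+1) := by positivity
    have h1 : ∀ᶠ k in Filter.atTop, dist (x k) X < 1/(m+1) :=
      Metric.tendsto_nhds.mp hx _ hδ
    have h2 : ∀ᶠ k in Filter.atTop, dist (y k) Y < 1/(m+1) :=
      Metric.tendsto_nhds.mp hy _ hδ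
    obtain ⟨k, hk1, hk2⟩ := (h1.and h2).exists
    rw [Real.dist_eq, abs_lt] at hk1 hk2
    refine le_trans (h k) (measure_mono ?_)
    intro z hz
    obtain ⟨hz1, hz2⟩ := hz
    constructor <;> [linarith [hk1.1]; linarith [hk2.2]]
  have hanti : Antitone (fun m : ℕ => Icc (X - 1/(m+1)) (Y + 1/(m+1))) := by
    intro m m' hmm z hz
    have : (1:ℝ)/(m'+1) ≤ 1/(m+1) := by
      apply one_div_le_one_div_of_le (by positivity)
      exact_mod_cast by omega
    obtain ⟨hz1, hz2⟩ := hz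
    constructor <;> linarith
  have hInter : (⋂ m : ℕ, Icc (X - 1/(m+1)) (Y + 1/(m+1))) = Icc X Y := by
    ext z
    simp only [mem_iInter, mem_Icc]
    constructor
    · intro hz
      constructor
      · by_contra hlt
        push_neg at hlt
        obtain ⟨m, hm⟩ := exists_nat_one_div_lt (show (0:ℝ) < X - z by linarith)
        linarith [(hz m).1]
      · by_contra hlt
        push_neg at hlt
        obtain ⟨m, hm⟩ := exists_nat_one_div_lt (show (0:ℝ) < z - Y by linarith)
        linarith [(hz m).2]
    · intro ⟨hz1, hz2⟩ m
      have hδ : (0:ℝ) < 1/(m+1) := by positivity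
      constructor <;> linarith
  have htend := tendsto_measure_iInter_atTop
    (μ := μ) (s := fun m : ℕ => Icc (X - 1/(m+1)) (Y + 1/(m+1)))
    (fun m => (measurableSet_Icc).nullMeasurableSet) hanti
    ⟨0, ne_top_of_le_ne_top hfin (measure_mono (subset_univ _))⟩
  rw [hInter] at htend
  have hle : ENNReal.ofReal B ≤ μ (Icc X Y) := ge_of_tendsto' htend key
  rwa [← measure_congr (MeasureTheory.Ioo_ae_eq_Icc (μ := μ) (a := X) (b := Y))] at hle

lemma feas_sInf_mem (n : ℕ) (v : Fin n → Measure ℝ) (hatomless : ∀ i, NoAtoms (v i))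
    (hprob : ∀ i, v i (Icc 0 1) = 1) (hsupp : ∀ i, v i (Icc (0 : ℝ) 1)ᶜ = 0)
    (B : ℝ) (S : Finset (Fin n)) (hne : (Feas n v B S).Nonempty) :
    sInf (Feas n v B S) ∈ Feas n v B S := by
  have hfin : ∀ i, v i Set.univ ≠ ⊤ := by
    intro i
    have h1 : v i Set.univ ≤ v i (Icc 0 1) + v i (Icc (0:ℝ) 1)ᶜ := by
      rw [← Set.union_compl_self (Icc (0:ℝ) 1)]
      exact measure_union_le _ _
    rw [hprob i, hsupp i, add_zero] at h1
    exact ne_top_of_le_ne_top ENNReal.one_ne_top h1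
  set A := Feas n v B S with hA
  have hbdd : BddBelow A := ⟨0, fun a ha => ha.1.1⟩
  set a0 := sInf A with ha0def
  have hseq : ∀ k : ℕ, ∃ a ∈ A, a < a0 + 1/(k+1) :=
    fun k => Real.lt_sInf_add_pos hne (by positivity)
  choose a haA halt using hseq
  have ha_lb : ∀ k, a0 ≤ a k := fun k => csInf_le hbdd (haA k)
  have hatend : Filter.Tendsto a Filter.atTop (nhds a0) := by
    have hup : Filter.Tendsto (fun k : ℕ => a0 + 1/(k+1)) Filter.atTop (nhds (a0 + 0)) :=
      Filter.Tendsto.add tendsto_const_nhds tendsto_one_div_add_atTop_nhds_zero_nat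
    rw [add_zero] at hup
    exact tendsto_of_tendsto_of_tendsto_of_le_of_le tendsto_const_nhds hup ha_lb
      (fun k => (halt k).le)
  have hdata : ∀ k, ∃ (c : Fin (S.card + 1) → ℝ) (σ : Fin S.card ≃ {i // i ∈ S}),
      Monotone c ∧ c 0 = 0 ∧ c (Fin.last S.card) = a k ∧
      ∀ b : Fin S.card,
        ENNReal.ofReal B ≤ v (σ b) (Ioo (c b.castSucc) (c b.succ)) :=
    fun k => (haA k).2
  choose c σ hmono hc0 hcl hval using hdata
  -- pigeonhole on σ
  obtain ⟨σ0, hσ0⟩ := Finite.exists_infinite_fiber σ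
  have hfreq : ∃ᶠ k in Filter.atTop, σ k = σ0 := by
    rw [Nat.frequently_atTop_iff_infinite]
    exact Set.infinite_coe_iff.mp hσ0
  obtain ⟨φ0, hφ0mono, hφ0⟩ := Filter.extraction_of_frequently_atTop hfreq
  -- compactness
  have hcmem : ∀ k, c (φ0 k) ∈ Set.pi Set.univ (fun _ : Fin (S.card + 1) => Icc (0:ℝ) 1) := by
    intro k j _
    have h2 : (0:ℝ) ≤ c (φ0 k) j := by
      rw [← hc0 (φ0 k)]; exact hmono _ (Fin.zero_le j)
    have h1 : c (φ0 k) j ≤ a (φ0 k) := by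
      rw [← hcl (φ0 k)]; exact hmono _ (Fin.le_last j)
    exact ⟨h2, h1.trans (haA (φ0 k)).1.2⟩
  obtain ⟨cl, hclmem, φ1, hφ1mono, hcltend⟩ :=
    (isCompact_univ_pi (fun _ : Fin (S.card + 1) => isCompact_Icc)).tendsto_subseq hcmem
  set ψ : ℕ → ℕ := φ0 ∘ φ1 with hψdef
  have hψmono : StrictMono ψ := hφ0mono.comp hφ1mono
  have htend_j : ∀ j, Filter.Tendsto (fun k => c (ψ k) j) Filter.atTop (nhds (cl j)) :=
    fun j => (tendsto_pi_nhds.mp hcltend) j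
  have haψ : Filter.Tendsto (fun k => a (ψ k)) Filter.atTop (nhds a0) :=
    hatend.comp (hψmono.tendsto_atTop)
  refine ⟨⟨le_csInf hne (fun b hb => hb.1.1), (ha_lb 0).trans (haA 0).1.2⟩,
    cl, σ0, ?_, ?_, ?_, ?_⟩
  · intro i j hij
    exact le_of_tendsto_of_tendsto' (htend_j i) (htend_j j) (fun k => hmono _ hij)
  · refine tendsto_nhds_unique (htend_j 0) ?_
    have heq : (fun k => c (ψ k) 0) = fun _ => (0:ℝ) := funext fun k => hc0 (ψ k)
    rw [heq]
    exact tendsto_const_nhds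
  · refine tendsto_nhds_unique (htend_j (Fin.last _)) ?_
    have heq : (fun k => c (ψ k) (Fin.last _)) = fun k => a (ψ k) := funext fun k => hcl (ψ k)
    rw [heq]
    exact haψ
  · intro b
    haveI : NullSingletonClass (v (σ0 b)) := hatomless (σ0 b)
    refine measure_ioo_limit (hfin _) (htend_j b.castSucc) (htend_j b.succ) (fun k => ?_)
    have hthis := hval (ψ k) b
    have hσψ : σ (ψ k) = σ0 := hφ0 (φ1 k)
    rwa [hσψ] at hthis

/-- `F(S)` is upward closed in `[0,1]`, its infimum (when nonempty)
is attained, and a connected division of `[0,1]` with egalitarian welfare at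
least `B` exists iff `F({1,…,n})` is nonempty (Theorem 5). -/
theorem stmt_6 (n : ℕ) (hn : 0 < n) (v : Fin n → Measure ℝ)
    (hatomless : ∀ i, NoAtoms (v i))
    (hprob : ∀ i, v i (Icc 0 1) = 1) (hsupp : ∀ i, v i (Icc (0 : ℝ) 1)ᶜ = 0)
    (B : ℝ) (hB0 : 0 < B) (hB1 : B ≤ 1) :
    (∀ S : Finset (Fin n), S.Nonempty →
      (∀ a ∈ Feas n v B S, ∀ a', a ≤ a' → a' ≤ 1 → a' ∈ Feas n v B S) ∧
      ((Feas n v B S).Nonempty → sInf (Feas n v B S) ∈ Feas n v B S)) ∧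
    ((∃ (x : Fin (n + 1) → ℝ) (π : Equiv.Perm (Fin n)),
        Monotone x ∧ x 0 = 0 ∧ x (Fin.last n) = 1 ∧
        ∀ i : Fin n, ENNReal.ofReal B ≤
          v i (Ioo (x (π.symm i).castSucc) (x (π.symm i).succ)))
      ↔ (Feas n v B Finset.univ).Nonempty) := by
  have h : (Finset.univ : Finset (Fin n)).card = n := Finset.card_fin n
  have h' : (Finset.univ : Finset (Fin n)).card + 1 = n + 1 := by rw [h]
  constructor
  · intro S hS
    refine ⟨fun a ha a' h1 h2 => feas_up n v B hS ha h1 h2,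
      fun hne => feas_sInf_mem n v hatomless hprob hsupp B S hne⟩
  · constructor
    · rintro ⟨x, π, hxmono, hx0, hxl, hxval⟩
      refine ⟨1, ⟨zero_le_one, le_refl 1⟩,
        fun j => x (Fin.cast h' j),
        (finCongr h).trans (π.trans (Equiv.subtypeUnivEquiv (fun i => Finset.mem_univ i)).symm),
        ?_, ?_, ?_, ?_⟩
      · intro i j hij
        apply hxmono
        rw [Fin.le_def] at hij ⊢
        exact hij
      · show x (Fin.cast h' 0) = 0
        have : Fin.cast h' (0 : Fin _) = (0 : Fin (n+1)) := by
          simp [Fin.ext_iff, -Finset.card_univ]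
        rw [this, hx0]
      · show x (Fin.cast h' (Fin.last _)) = 1
        have : Fin.cast h' (Fin.last _) = Fin.last n := by
          simp [Fin.ext_iff, h, -Finset.card_univ]
        rw [this, hxl]
      · intro b
        simp only [Equiv.trans_apply, Equiv.subtypeUnivEquiv_symm_apply]
        have hkey := hxval (π (finCongr h b))
        rw [Equiv.symm_apply_apply] at hkey
        have e1 : (finCongr h b).castSucc = Fin.cast h' b.castSucc := by
          simp [Fin.ext_iff, -Finset.card_univ]
        have e2 : (finCongr h b).succ = Fin.cast h' b.succ := by
          simp [Fin.ext_iff, -Finset.card_univ]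
        rw [e1, e2] at hkey
        exact hkey
    · rintro ⟨a, haF⟩
      have h1F : (1:ℝ) ∈ Feas n v B Finset.univ :=
        feas_up n v B (Finset.univ_nonempty_iff.mpr ⟨⟨0, hn⟩⟩) haF haF.1.2 le_rfl
      obtain ⟨-, c, σ, hcm, hc0, hcl, hcv⟩ := h1F
      refine ⟨fun j => c (Fin.cast h'.symm j),
        (finCongr h.symm).trans (σ.trans (Equiv.subtypeUnivEquiv (fun i => Finset.mem_univ i))),
        ?_, ?_, ?_, ?_⟩
      · intro i j hij
        apply hcm
        rw [Fin.le_def] at hij ⊢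
        exact hij
      · show c (Fin.cast h'.symm 0) = 0
        have : Fin.cast h'.symm (0 : Fin (n+1)) = (0 : Fin _) := by
          simp [Fin.ext_iff, -Finset.card_univ]
        rw [this, hc0]
      · show c (Fin.cast h'.symm (Fin.last n)) = 1
        have : Fin.cast h'.symm (Fin.last n) = Fin.last _ := by
          simp [Fin.ext_iff, h, -Finset.card_univ]
        rw [this, hcl]
      · intro i
        set e := Equiv.subtypeUnivEquiv (fun i : Fin n => Finset.mem_univ i)
        set b : Fin (Finset.univ : Finset (Fin n)).card := σ.symm (e.symm i) with hbdef
        have hπ : (((finCongr h.symm).trans (σ.trans e)).symm i) = Fin.cast h b := by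
          simp [Equiv.symm_apply_eq, hbdef, Fin.ext_iff, -Finset.card_univ]
        rw [hπ]
        show ENNReal.ofReal B ≤
          v i (Ioo (c (Fin.cast h'.symm (Fin.cast h b).castSucc))
            (c (Fin.cast h'.symm (Fin.cast h b).succ)))
        have e1 : Fin.cast h'.symm (Fin.cast h b).castSucc = b.castSucc := by
          simp [Fin.ext_iff, -Finset.card_univ]
        have e2 : Fin.cast h'.symm (Fin.cast h b).succ = b.succ := by
          simp [Fin.ext_iff, -Finset.card_univ]
        rw [e1, e2]
        have hkey := hcv b
        have hσb : σ b = e.symm i := by rw [hbdef, Equiv.apply_symm_apply]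
        rw [hσb] at hkey
        exact hkey
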